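/- Let f be a C¹ diffeomorphism of [0,1] onto itself with positive derivative such that f(x) > x for all x ∈ (0,1), suppose var(log Df) ≤ V with V > 0, fix x₀ ∈ (0,1) and let I := [x₀, f(x₀)]. Let g be a C¹ diffeomorphism of [0,1] with positive derivative which equals the identity outside I, and suppose there are N ≥ 1 and z ∈ I such that the N-th iterate gᴺ satisfies gᴺ(z) ∈ I and Dgᴺ(z) > e^{2V}. Then for every K ≥ 1 there exists a point y_K ∈ f^K(I) with D(f^K ∘ g ∘ f^{−K})(y_K) ≥ e^{V/N}. -/

import Mathlib

open Set Function

lemma deriv_iterate' (f : ℝ → ℝ) (hf : Differentiable ℝ f) (n : ℕ) (x : ℝ) :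
    deriv (f^[n]) x = ∏ j ∈ Finset.range n, deriv f (f^[j] x) := by
  induction n with
  | zero => simp
  | succ n ih =>
      have hdi : DifferentiableAt ℝ (f^[n]) x := (hf.iterate n).differentiableAt
      rw [Function.iterate_succ', Finset.prod_range_succ]
      rw [deriv_comp (x := x) hf.differentiableAt hdi, ih]
      ring

lemma exists_large_factor (N : ℕ) (hN : 1 ≤ N) (d : ℕ → ℝ) (hd : ∀ j < N, 0 < d j)
    (c : ℝ) (h : c ^ N ≤ ∏ j ∈ Finset.range N, d j) :
    ∃ j < N, c ≤ d j := by
  by_contra hcon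
  push_neg at hcon
  have hlt : ∏ j ∈ Finset.range N, d j < ∏ j ∈ Finset.range N, c := by
    apply Finset.prod_lt_prod_of_nonempty
    · intro j hj; exact hd j (Finset.mem_range.mp hj)
    · intro j hj; exact hcon j (Finset.mem_range.mp hj)
    · exact Finset.nonempty_range_iff.mpr (by omega)
  rw [Finset.prod_const, Finset.card_range] at hlt
  linarith

lemma sum_abs_le_variation (L : ℝ → ℝ) (s : Set ℝ) (K : ℕ) (hK : 1 ≤ K) (a b : ℕ → ℝ)
    (hmema : ∀ j < K, a j ∈ s) (hmemb : ∀ j < K, b j ∈ s)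
    (hab : ∀ j < K, b j ≤ a j) (hstep : ∀ j, j + 1 < K → a j ≤ b (j + 1)) :
    ENNReal.ofReal (∑ j ∈ Finset.range K, |L (a j) - L (b j)|) ≤ eVariationOn L s := by
  set u : ℕ → ℝ := fun i => if i < 2 * K then (if Even i then b (i / 2) else a (i / 2)) else a (K - 1) with hu
  have hu2j : ∀ j < K, u (2 * j) = b j := by
    intro j hj
    simp only [hu]
    rw [if_pos (by omega), if_pos ⟨j, by ring⟩]
    congr 1; omega
  have hu2j1 : ∀ j < K, u (2 * j + 1) = a j := by
    intro j hj
    simp only [hu]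
    rw [if_pos (by omega), if_neg (by rw [Nat.even_iff]; omega)]
    congr 1; omega
  have humono : Monotone u := by
    apply monotone_nat_of_le_succ
    intro i
    by_cases h1 : i + 1 < 2 * K
    · have h0 : i < 2 * K := by omega
      simp only [hu, if_pos h0, if_pos h1]
      rcases Nat.even_or_odd i with he | ho
      · rw [if_pos he, if_neg (by simpa [Nat.even_add_one] using he)]
        have : (i + 1) / 2 = i / 2 := by obtain ⟨m, hm⟩ := he; omega
        rw [this]
        exact hab (i / 2) (by omega)
      · have hne : ¬ Even i := Nat.not_even_iff_odd.mpr ho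
        rw [if_neg hne, if_pos (by simpa [Nat.even_add_one] using hne)]
        obtain ⟨m, hm⟩ := ho
        have e1 : i / 2 = m := by omega
        have e2 : (i + 1) / 2 = m + 1 := by omega
        rw [e1, e2]
        exact hstep m (by omega)
    · by_cases h0 : i < 2 * K
      · have hi : i = 2 * K - 1 := by omega
        have hne : ¬ Even i := by subst hi; rw [Nat.even_iff]; omega
        simp only [hu, if_pos h0, if_neg h1, if_neg hne]
        have : i / 2 = K - 1 := by omega
        rw [this]
      · simp only [hu, if_neg h0, if_neg (by omega : ¬ (i + 1 < 2 * K))]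
        exact le_refl _
  have humem : ∀ i, u i ∈ s := by
    intro i
    simp only [hu]
    by_cases h0 : i < 2 * K
    · rw [if_pos h0]
      by_cases he : Even i
      · rw [if_pos he]; exact hmemb _ (by omega)
      · rw [if_neg he]; exact hmema _ (by omega)
    · rw [if_neg h0]; exact hmema _ (by omega)
  have key := eVariationOn.sum_le (f := L) (s := s) (n := 2 * K) humono humem
  refine le_trans ?_ key
  rw [ENNReal.ofReal_sum_of_nonneg (fun j _ => abs_nonneg _)]
  have hterm : ∀ j ∈ Finset.range K,
      ENNReal.ofReal |L (a j) - L (b j)| = edist (L (u (2 * j + 1))) (L (u (2 * j))) := by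
    intro j hj
    have hj' := Finset.mem_range.mp hj
    rw [hu2j j hj', hu2j1 j hj', edist_dist, Real.dist_eq]
  rw [Finset.sum_congr rfl hterm]
  have : ∑ j ∈ Finset.range K, edist (L (u (2 * j + 1))) (L (u (2 * j)))
      = ∑ i ∈ (Finset.range K).image (fun j => 2 * j), edist (L (u (i + 1))) (L (u i)) := by
    rw [Finset.sum_image (by intros a _ b _ h; simp only at h; omega)]
  rw [this]
  apply Finset.sum_le_sum_of_subset
  intro x hx
  simp only [Finset.mem_image, Finset.mem_range] at hx ⊢
  obtain ⟨j, hj, rfl⟩ := hx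
  omega

theorem conjugate_has_point_of_large_deriv
    (f finv g : ℝ → ℝ) (V : ℝ) (hV : 0 < V)
    (hf : ContDiff ℝ 1 f)
    (hfb : Set.BijOn f (Set.Icc 0 1) (Set.Icc 0 1))
    (hf' : ∀ x ∈ Set.Icc (0:ℝ) 1, 0 < deriv f x)
    (hfx : ∀ x ∈ Set.Ioo (0:ℝ) 1, x < f x)
    (hfinv : ContDiff ℝ 1 finv)
    (hinvl : ∀ x ∈ Set.Icc (0:ℝ) 1, finv (f x) = x)
    (hinvr : ∀ x ∈ Set.Icc (0:ℝ) 1, f (finv x) = x)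
    (hvar : eVariationOn (fun x => Real.log (deriv f x)) (Set.Icc 0 1) ≤ ENNReal.ofReal V)
    (x₀ : ℝ) (hx₀ : x₀ ∈ Set.Ioo (0:ℝ) 1)
    (hg : ContDiff ℝ 1 g)
    (hgb : Set.BijOn g (Set.Icc 0 1) (Set.Icc 0 1))
    (hg' : ∀ x ∈ Set.Icc (0:ℝ) 1, 0 < deriv g x)
    (hgid : ∀ x : ℝ, x ∉ Set.Icc x₀ (f x₀) → g x = x)
    (N : ℕ) (hN : 1 ≤ N) (z : ℝ) (hz : z ∈ Set.Icc x₀ (f x₀))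
    (hgz : g^[N] z ∈ Set.Icc x₀ (f x₀))
    (hDg : Real.exp (2 * V) < deriv (g^[N]) z)
    (K : ℕ) (hK : 1 ≤ K) :
    ∃ y ∈ f^[K] '' Set.Icc x₀ (f x₀),
      Real.exp (V / N) ≤ deriv (f^[K] ∘ g ∘ finv^[K]) y := by
  have hfd : Differentiable ℝ f := hf.differentiable one_ne_zero
  have hgd : Differentiable ℝ g := hg.differentiable one_ne_zero
  have hfinvd : Differentiable ℝ finv := hfinv.differentiable one_ne_zero
  have hmono : StrictMonoOn f (Icc 0 1) := by
    apply strictMonoOn_of_deriv_pos (convex_Icc 0 1) hfd.continuous.continuousOn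
    rw [interior_Icc]
    exact fun x hx => hf' x (Ioo_subset_Icc_self hx)
  have h0m : (0:ℝ) ∈ Icc (0:ℝ) 1 := by norm_num
  have h1m : (1:ℝ) ∈ Icc (0:ℝ) 1 := by norm_num
  have hf0 : f 0 = 0 := by
    by_contra hne
    obtain ⟨x, hx, hfx0⟩ := hfb.surjOn h0m
    have h0lt : 0 < f 0 := lt_of_le_of_ne (hfb.mapsTo h0m).1 (Ne.symm hne)
    have hx0 : 0 < x := by
      rcases eq_or_lt_of_le hx.1 with h | h
      · exfalso; rw [← h] at hfx0; exact hne hfx0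
      · exact h
    have := hmono h0m hx hx0
    rw [hfx0] at this; linarith
  have hf1 : f 1 = 1 := by
    by_contra hne
    obtain ⟨x, hx, hfx1⟩ := hfb.surjOn h1m
    have h1lt : f 1 < 1 := lt_of_le_of_ne (hfb.mapsTo h1m).2 hne
    have hx1 : x < 1 := by
      rcases eq_or_lt_of_le hx.2 with h | h
      · exfalso; rw [h] at hfx1; exact hne hfx1
      · exact h
    have := hmono hx h1m hx1
    rw [hfx1] at this; linarith
  have hIoo : ∀ x ∈ Ioo (0:ℝ) 1, f x ∈ Ioo (0:ℝ) 1 := by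
    intro x hx
    constructor
    · rw [← hf0]; exact hmono h0m (Ioo_subset_Icc_self hx) hx.1
    · rw [← hf1]; exact hmono (Ioo_subset_Icc_self hx) h1m hx.2
  have hIooIter : ∀ n, ∀ x ∈ Ioo (0:ℝ) 1, f^[n] x ∈ Ioo (0:ℝ) 1 := by
    intro n
    induction n with
    | zero => intro x hx; simpa using hx
    | succ n ih =>
        intro x hx
        rw [Function.iterate_succ_apply]
        exact ih (f x) (hIoo x hx)
  have hIccIter : ∀ n, ∀ x ∈ Icc (0:ℝ) 1, f^[n] x ∈ Icc (0:ℝ) 1 := by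
    intro n
    induction n with
    | zero => intro x hx; simpa using hx
    | succ n ih =>
        intro x hx
        rw [Function.iterate_succ_apply]
        exact ih (f x) (hfb.mapsTo hx)
  have hMonoIter : ∀ n, ∀ x ∈ Icc (0:ℝ) 1, ∀ y ∈ Icc (0:ℝ) 1, x ≤ y → f^[n] x ≤ f^[n] y := by
    intro n
    induction n with
    | zero => intro x _ y _ h; simpa using h
    | succ n ih =>
        intro x hx y hy h
        rw [Function.iterate_succ_apply, Function.iterate_succ_apply]
        exact ih (f x) (hfb.mapsTo hx) (f y) (hfb.mapsTo hy) (hmono.monotoneOn hx hy h)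
  -- the fundamental domain
  have hx₀lt : x₀ < f x₀ := hfx x₀ hx₀
  have hfx₀Ioo : f x₀ ∈ Ioo (0:ℝ) 1 := hIoo x₀ hx₀
  have hsubIoo : Icc x₀ (f x₀) ⊆ Ioo (0:ℝ) 1 := fun x hx =>
    ⟨lt_of_lt_of_le hx₀.1 hx.1, lt_of_le_of_lt hx.2 hfx₀Ioo.2⟩
  have hsubIcc : Icc x₀ (f x₀) ⊆ Icc (0:ℝ) 1 := fun x hx => Ioo_subset_Icc_self (hsubIoo hx)
  -- iterates of g stay in the fundamental domain
  have hfixg : ∀ x, x ∉ Icc x₀ (f x₀) → ∀ m, g^[m] x = x := by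
    intro x hx m
    induction m with
    | zero => simp
    | succ m ih => rw [Function.iterate_succ_apply, hgid x hx, ih]
  have hw : ∀ j ≤ N, g^[j] z ∈ Icc x₀ (f x₀) := by
    intro j hj
    by_contra hnot
    have h1 : g^[N - j] (g^[j] z) = g^[j] z := hfixg _ hnot (N - j)
    rw [← Function.iterate_add_apply] at h1
    have : N - j + j = N := by omega
    rw [this] at h1
    rw [h1] at hgz
    exact hnot hgz
  -- positivity of deriv of f^[K]
  have hApos : ∀ x ∈ Icc (0:ℝ) 1, 0 < deriv (f^[K]) x := by
    intro x hx
    rw [deriv_iterate' f hfd K x]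
    exact Finset.prod_pos fun j _ => hf' _ (hIccIter j x hx)
  -- left inverse of iterates
  have hfinvf : ∀ n, ∀ x ∈ Icc (0:ℝ) 1, finv^[n] (f^[n] x) = x := by
    intro n
    induction n with
    | zero => intro x _; simp
    | succ n ih =>
        intro x hx
        rw [Function.iterate_succ_apply' f, Function.iterate_succ_apply finv,
          hinvl _ (hIccIter n x hx), ih x hx]
  -- derivative of finv^[K] at images of interior points
  have hderivinv : ∀ x ∈ Ioo (0:ℝ) 1,
      deriv (finv^[K]) (f^[K] x) * deriv (f^[K]) x = 1 := by
    intro x hx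
    have hnhds : (finv^[K] ∘ f^[K]) =ᶠ[nhds x] id := by
      filter_upwards [Icc_mem_nhds hx.1 hx.2] with y hy
      exact hfinvf K y hy
    have h1 : deriv (finv^[K] ∘ f^[K]) x = 1 := by
      rw [Filter.EventuallyEq.deriv_eq hnhds, deriv_id]
    rw [deriv_comp (x := x) ((hfinvd.iterate K).differentiableAt)
      ((hfd.iterate K).differentiableAt)] at h1
    exact h1
  -- derivative of the conjugate at images of interior points
  have hderivh : ∀ x ∈ Ioo (0:ℝ) 1,
      deriv (f^[K] ∘ g ∘ finv^[K]) (f^[K] x)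
        = deriv (f^[K]) (g x) * deriv g x / deriv (f^[K]) x := by
    intro x hx
    have hxI : x ∈ Icc (0:ℝ) 1 := Ioo_subset_Icc_self hx
    have hcomp : (f^[K] ∘ g ∘ finv^[K]) = (f^[K] ∘ g) ∘ finv^[K] := rfl
    rw [hcomp]
    rw [deriv_comp _ ((hfd.iterate K).comp hgd).differentiableAt
      ((hfinvd.iterate K)).differentiableAt]
    rw [hfinvf K x hxI]
    rw [deriv_comp _ ((hfd.iterate K)).differentiableAt hgd.differentiableAt]
    have hinv : deriv (finv^[K]) (f^[K] x) = 1 / deriv (f^[K]) x :=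
      eq_one_div_of_mul_eq_one_left (hderivinv x hx)
    rw [hinv]
    ring
  -- basic memberships
  have hzI : z ∈ Icc (0:ℝ) 1 := hsubIcc hz
  have hwN : g^[N] z ∈ Icc x₀ (f x₀) := hw N le_rfl
  have hwNI : g^[N] z ∈ Icc (0:ℝ) 1 := hsubIcc hwN
  set L : ℝ → ℝ := fun x => Real.log (deriv f x) with hLdef
  -- the distortion estimate
  have hsum : ∑ j ∈ Finset.range K, |L (f^[j] (g^[N] z)) - L (f^[j] z)| ≤ V := by
    have main : ∀ p q : ℝ, p ∈ Icc x₀ (f x₀) → q ∈ Icc x₀ (f x₀) → q ≤ p →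
        ∑ j ∈ Finset.range K, |L (f^[j] p) - L (f^[j] q)| ≤ V := by
      intro p q hp hq hqp
      have hpI : p ∈ Icc (0:ℝ) 1 := hsubIcc hp
      have hqI : q ∈ Icc (0:ℝ) 1 := hsubIcc hq
      have hstep : ∀ j, j + 1 < K → f^[j] p ≤ f^[j + 1] q := by
        intro j _
        rw [Function.iterate_succ_apply]
        have hfq : f x₀ ≤ f q :=
          hmono.monotoneOn (Ioo_subset_Icc_self hx₀) hqI hq.1
        exact hMonoIter j p hpI (f q) (hfb.mapsTo hqI) (le_trans hp.2 hfq)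
      have hvarle := sum_abs_le_variation L (Icc 0 1) K hK (fun j => f^[j] p) (fun j => f^[j] q)
        (fun j _ => hIccIter j p hpI) (fun j _ => hIccIter j q hqI)
        (fun j _ => hMonoIter j q hqI p hpI hqp) hstep
      exact (ENNReal.ofReal_le_ofReal_iff hV.le).mp (le_trans hvarle hvar)
    rcases le_total z (g^[N] z) with hc | hc
    · exact main _ _ hwN hz hc
    · have h2 := main _ _ hz hwN hc
      calc ∑ j ∈ Finset.range K, |L (f^[j] (g^[N] z)) - L (f^[j] z)|
          = ∑ j ∈ Finset.range K, |L (f^[j] z) - L (f^[j] (g^[N] z))| := by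
            refine Finset.sum_congr rfl fun j _ => ?_
            rw [abs_sub_comm]
        _ ≤ V := h2
  have hlog : ∀ x ∈ Icc (0:ℝ) 1, Real.log (deriv (f^[K]) x) = ∑ j ∈ Finset.range K, L (f^[j] x) := by
    intro x hx
    rw [deriv_iterate' f hfd K x]
    exact Real.log_prod fun j _ => ne_of_gt (hf' _ (hIccIter j x hx))
  have hdiff : -V ≤ Real.log (deriv (f^[K]) (g^[N] z)) - Real.log (deriv (f^[K]) z) := by
    rw [hlog _ hwNI, hlog _ hzI, ← Finset.sum_sub_distrib]
    have habs := Finset.abs_sum_le_sum_abs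
      (fun j => L (f^[j] (g^[N] z)) - L (f^[j] z)) (Finset.range K)
    have hval := le_trans habs hsum
    linarith [neg_abs_le (∑ j ∈ Finset.range K, (L (f^[j] (g^[N] z)) - L (f^[j] z)))]
  have hratio : Real.exp (-V) * deriv (f^[K]) z ≤ deriv (f^[K]) (g^[N] z) := by
    have h1 := hApos z hzI
    have h2 := hApos _ hwNI
    have he : Real.exp (-V) * deriv (f^[K]) z = Real.exp (-V + Real.log (deriv (f^[K]) z)) := by
      rw [Real.exp_add, Real.exp_log h1]
    rw [he, ← Real.exp_log h2]
    apply Real.exp_le_exp.mpr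
    linarith
  -- the product of derivatives
  set d : ℕ → ℝ := fun j => deriv (f^[K] ∘ g ∘ finv^[K]) (f^[K] (g^[j] z)) with hddef
  have hgw : ∀ j : ℕ, g (g^[j] z) = g^[j + 1] z := fun j =>
    (Function.iterate_succ_apply' g j z).symm
  have hdval : ∀ j < N,
      d j = deriv (f^[K]) (g^[j + 1] z) * deriv g (g^[j] z) / deriv (f^[K]) (g^[j] z) := by
    intro j hj
    have := hderivh _ (hsubIoo (hw j (le_of_lt hj)))
    rw [hddef]
    simp only []
    rw [this, hgw j]
  have hdpos : ∀ j < N, 0 < d j := by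
    intro j hj
    rw [hdval j hj]
    have h1 := hApos _ (hsubIcc (hw (j + 1) hj))
    have h2 := hg' _ (hsubIcc (hw j (le_of_lt hj)))
    have h3 := hApos _ (hsubIcc (hw j (le_of_lt hj)))
    positivity
  have hprod : ∀ n ≤ N, ∏ j ∈ Finset.range n, d j
      = deriv (f^[K]) (g^[n] z) * (∏ j ∈ Finset.range n, deriv g (g^[j] z))
        / deriv (f^[K]) z := by
    intro n hn
    induction n with
    | zero => simp [div_self (ne_of_gt (hApos z hzI))]
    | succ n ih =>
        have hn' : n ≤ N := by omega
        rw [Finset.prod_range_succ, ih hn', Finset.prod_range_succ, hdval n (by omega)]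
        have h1 := ne_of_gt (hApos _ (hsubIcc (hw n hn')))
        have h2 := ne_of_gt (hApos z hzI)
        field_simp
  have hP : Real.exp (V / N) ^ N ≤ ∏ j ∈ Finset.range N, d j := by
    rw [hprod N le_rfl, ← deriv_iterate' g hgd N z]
    have expN : Real.exp (V / N) ^ N = Real.exp V := by
      rw [← Real.exp_nat_mul]
      congr 1
      field_simp
    rw [expN]
    have h2 := hApos z hzI
    rw [le_div_iff₀ h2]
    have step1 : (Real.exp (-V) * deriv (f^[K]) z) * Real.exp (2 * V)
        ≤ deriv (f^[K]) (g^[N] z) * deriv (g^[N]) z :=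
      mul_le_mul hratio hDg.le (Real.exp_pos _).le (hApos _ hwNI).le
    have he : Real.exp (-V) * Real.exp (2 * V) = Real.exp V := by
      rw [← Real.exp_add]; ring_nf
    have e2 : (Real.exp (-V) * deriv (f^[K]) z) * Real.exp (2 * V)
        = Real.exp V * deriv (f^[K]) z := by
      rw [mul_right_comm, he]
    linarith
  obtain ⟨j, hjN, hdj⟩ := exists_large_factor N hN d hdpos _ hP
  refine ⟨f^[K] (g^[j] z), ⟨g^[j] z, hw j (le_of_lt hjN), rfl⟩, ?_⟩
  simpa [hddef] using hdj
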